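/- Let H be a real Hilbert space and let B : H →L[ℝ] H be a self-adjoint (symmetric) bounded operator with ‖B‖ ≤ 1. Then the block-diagonal operator diag(B, −B) on the Hilbert space direct sum H ⊕ H (the space H × H with the ℓ² product inner product), given by (x, y) ↦ (B x, −B y), is the average of two orthogonal operators: there exist orthogonal operators U and V on H ⊕ H such that diag(B, −B) = (1/2 : ℝ) • (U + V). -/

import Mathlib

open Finset ContinuousLinearMap

section AuxSqrt

noncomputable def catR (n : ℕ) : ℝ := (catalan n : ℝ) / 4 ^ n


lemma catR_nonneg (n : ℕ) : 0 ≤ catR n := by unfold catR; positivity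

lemma catR_conv (n : ℕ) :
    ∑ p ∈ antidiagonal n, catR p.1 * catR p.2 = 4 * catR (n + 1) := by
  have h : ∀ p ∈ antidiagonal n, catR p.1 * catR p.2
      = ((catalan p.1 * catalan p.2 : ℕ) : ℝ) / 4 ^ n := by
    rintro ⟨i, j⟩ hij
    rw [Finset.HasAntidiagonal.mem_antidiagonal] at hij
    simp only [catR]
    push_cast
    rw [div_mul_div_comm, ← pow_add, hij]
  rw [Finset.sum_congr rfl h, ← Finset.sum_div, ← Nat.cast_sum, ← catalan_succ']
  unfold catR
  field_simp
  ring

lemma biUnion_antidiagonal_subset (N : ℕ) :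
    (range N).biUnion antidiagonal ⊆ range N ×ˢ range N := by
  intro p hp
  simp only [mem_biUnion, mem_range, Finset.HasAntidiagonal.mem_antidiagonal] at hp
  obtain ⟨n, hn, hpn⟩ := hp
  simp only [mem_product, mem_range]
  omega

lemma sum_catR_le (N : ℕ) : ∑ n ∈ range N, catR n ≤ 2 := by
  induction N with
  | zero => norm_num
  | succ N ih =>
    have key : ∑ n ∈ range N, (4 * catR (n + 1)) ≤ (∑ n ∈ range N, catR n) ^ 2 := by
      calc ∑ n ∈ range N, (4 * catR (n + 1))
          = ∑ n ∈ range N, ∑ p ∈ antidiagonal n, catR p.1 * catR p.2 := by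
            simp [catR_conv]
        _ = ∑ p ∈ (range N).biUnion antidiagonal, catR p.1 * catR p.2 := by
            rw [Finset.sum_biUnion]
            intro a _ b _ hab
            simp only [Finset.disjoint_left]
            intro p hpa hpb
            rw [Finset.HasAntidiagonal.mem_antidiagonal] at hpa hpb
            exact hab (hpa ▸ hpb ▸ rfl)
        _ ≤ ∑ p ∈ range N ×ˢ range N, catR p.1 * catR p.2 := by
            apply Finset.sum_le_sum_of_subset_of_nonneg (biUnion_antidiagonal_subset N)
            intro p _ _
            exact mul_nonneg (catR_nonneg _) (catR_nonneg _)
        _ = (∑ n ∈ range N, catR n) ^ 2 := by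
            rw [sq, Finset.sum_mul_sum, Finset.sum_product]
    have h4 : ∑ n ∈ range N, (4 * catR (n + 1)) = 4 * ∑ n ∈ range N, catR (n+1) := by
      rw [Finset.mul_sum]
    have h2 : ∑ n ∈ range (N+1), catR n = ∑ n ∈ range N, catR (n+1) + catR 0 :=
      Finset.sum_range_succ' _ _
    have h0 : catR 0 = 1 := by simp [catR]
    have ht0 : (0:ℝ) ≤ ∑ n ∈ range N, catR n :=
      Finset.sum_nonneg (fun n _ => catR_nonneg n)
    have hs : ∑ n ∈ range N, catR (n+1) ≤ 1 := by nlinarith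
    rw [h2, h0]; linarith

lemma summable_catR : Summable catR :=
  summable_of_sum_range_le catR_nonneg sum_catR_le

/-- the coefficient sequence of `1 - √(1-t)` -/
noncomputable def eCoef : ℕ → ℝ
  | 0 => 0
  | (k+1) => catR k / 2

lemma eCoef_nonneg (n : ℕ) : 0 ≤ eCoef n := by
  cases n with
  | zero => simp [eCoef]
  | succ k => exact div_nonneg (catR_nonneg k) (by norm_num)

lemma summable_eCoef : Summable eCoef := by
  rw [← summable_nat_add_iff 1]
  exact (summable_catR.div_const 2).congr (fun n => rfl)

lemma eCoef_one : eCoef 1 = 1/2 := by simp [eCoef, catR]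

lemma eCoef_conv (n : ℕ) :
    ∑ p ∈ antidiagonal n, eCoef p.1 * eCoef p.2
      = 2 * eCoef n - (if n = 1 then 1 else 0) := by
  match n with
  | 0 => simp [eCoef]
  | 1 => norm_num [Finset.Nat.sum_antidiagonal_eq_sum_range_succ_mk, eCoef, Finset.sum_range_succ,
      catR]
  | (m+2) =>
    rw [Finset.Nat.sum_antidiagonal_eq_sum_range_succ_mk]
    have h1 : ∑ k ∈ range (m+2+1), eCoef k * eCoef (m + 2 - k)
        = ∑ k ∈ range (m+2), eCoef (k+1) * eCoef (m + 2 - (k+1)) + eCoef 0 * eCoef (m+2) := by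
      rw [Finset.sum_range_succ']
      norm_num
    rw [h1]
    rw [show eCoef 0 = 0 from rfl, zero_mul, add_zero]
    rw [Finset.sum_range_succ]
    have h2 : (m + 2 - (m + 1 + 1)) = 0 := by omega
    rw [h2, show eCoef 0 = 0 from rfl, mul_zero, add_zero]
    have h3 : ∀ k ∈ range (m+1), eCoef (k+1) * eCoef (m + 2 - (k+1))
        = catR k * catR (m - k) / 4 := by
      intro k hk
      rw [mem_range] at hk
      have hmk : m + 2 - (k+1) = (m - k) + 1 := by omega
      rw [hmk, show ∀ j, eCoef (j+1) = catR j / 2 from fun _ => rfl,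
        show ∀ j, eCoef (j+1) = catR j / 2 from fun _ => rfl]
      ring
    rw [Finset.sum_congr rfl h3, ← Finset.sum_div]
    have h4 : ∑ k ∈ range (m+1), catR k * catR (m - k)
        = ∑ p ∈ antidiagonal m, catR p.1 * catR p.2 := by
      rw [Finset.Nat.sum_antidiagonal_eq_sum_range_succ_mk]
    rw [h4, catR_conv, show eCoef (m + 2) = catR (m+1) / 2 from rfl,
      if_neg (by omega : ¬ m + 2 = 1)]
    ring


variable {H : Type*} [NormedAddCommGroup H] [InnerProductSpace ℝ H] [CompleteSpace H]

set_option synthInstance.maxHeartbeats 1000000 in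
set_option maxHeartbeats 1000000 in
lemma exists_opSqrt (B : H →L[ℝ] H) (hB : IsSelfAdjoint B) (hnorm : ‖B‖ ≤ 1) :
    ∃ S : H →L[ℝ] H, IsSelfAdjoint S ∧ S * S = 1 - B * B ∧ B * S = S * B := by
  set A : H →L[ℝ] H := B * B with hA
  have hAnorm : ‖A‖ ≤ 1 := le_trans (norm_mul_le B B) (by nlinarith [norm_nonneg B])
  have hApow : ∀ n, ‖A ^ n‖ ≤ 1 := by
    intro n
    induction n with
    | zero => rw [pow_zero]; exact ContinuousLinearMap.norm_id_le
    | succ n ih =>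
      calc ‖A ^ (n+1)‖ = ‖A ^ n * A‖ := by rw [pow_succ]
        _ ≤ ‖A ^ n‖ * ‖A‖ := norm_mul_le _ _
        _ ≤ 1 := by nlinarith [norm_nonneg (A ^ n), norm_nonneg A]
  -- the series terms
  set g : ℕ → (H →L[ℝ] H) := fun n => eCoef n • A ^ n with hg
  have hgnorm : ∀ n, ‖g n‖ ≤ eCoef n := by
    intro n
    have h1 := norm_smul_le (eCoef n) (A ^ n)
    rw [Real.norm_eq_abs, abs_of_nonneg (eCoef_nonneg n)] at h1
    have h2 : ‖g n‖ = ‖eCoef n • A ^ n‖ := by rw [hg]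
    rw [h2]
    nlinarith [hApow n, eCoef_nonneg n, norm_nonneg (A ^ n)]
  have hgnormsum : Summable (fun n => ‖g n‖) :=
    Summable.of_nonneg_of_le (fun n => norm_nonneg _) hgnorm summable_eCoef
  have hgsum : Summable g := hgnormsum.of_norm
  set E : H →L[ℝ] H := ∑' n, g n with hE
  -- E is self-adjoint
  have hstarA : star A = A := by
    rw [hA, star_mul, hB.star_eq]
  have hEsa : IsSelfAdjoint E := by
    rw [IsSelfAdjoint, hE, tsum_star]
    congr 1
    funext n
    rw [hg]
    simp only [star_smul, star_pow, hstarA, star_trivial]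
  -- Cauchy product: E * E = 2 • E - A
  have hEE : E * E = (2:ℝ) • E - A := by
    rw [hE, tsum_mul_tsum_eq_tsum_sum_antidiagonal_of_summable_norm hgnormsum hgnormsum]
    have hterm : ∀ n, ∑ p ∈ antidiagonal n, g p.1 * g p.2
        = (2:ℝ) • g n - (if n = 1 then A else 0) := by
      intro n
      have : ∀ p ∈ antidiagonal n, g p.1 * g p.2 = (eCoef p.1 * eCoef p.2) • A ^ n := by
        rintro ⟨i, j⟩ hij
        rw [Finset.HasAntidiagonal.mem_antidiagonal] at hij
        rw [hg]
        simp only [smul_mul_assoc, mul_smul_comm, ← pow_add, smul_smul]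
        rw [hij, mul_comm (eCoef j) (eCoef i)]
      rw [Finset.sum_congr rfl this, ← Finset.sum_smul, eCoef_conv, sub_smul]
      congr 1
      · rw [hg, mul_smul]
      · split
        · next h => subst h; simp
        · simp
    rw [tsum_congr hterm, Summable.tsum_sub]
    · congr 1
      · rw [Summable.tsum_const_smul _ hgsum]
      · exact tsum_ite_eq 1 (fun _ => A)
    · exact hgsum.const_smul _
    · apply Summable.of_norm_bounded (g := fun n => if n = 1 then ‖A‖ else 0)
      · apply summable_of_finite_support
        apply Set.Finite.subset (Set.finite_singleton 1)
        intro n hn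
        simp only [Function.mem_support] at hn
        by_contra h
        simp only [Set.mem_singleton_iff] at h
        rw [if_neg h] at hn
        exact hn rfl
      · intro n
        split <;> simp
  -- commutation
  have hBA : Commute B A := (Commute.refl B).mul_right (Commute.refl B)
  have hBE : Commute B E := by
    apply Commute.tsum_right
    intro n
    exact ((hBA.pow_right n).smul_right _)
  refine ⟨1 - E, ?_, ?_, ?_⟩
  · rw [IsSelfAdjoint, star_sub, star_one, hEsa.star_eq]
  · have : (1 - E) * (1 - E) = 1 - (2:ℝ) • E + E * E := by
      rw [two_smul]
      noncomm_ring
    rw [this, hEE]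
    abel
  · have : Commute B (1 - E) := (Commute.one_right B).sub_right hBE
    exact this

end AuxSqrt

section Blocks

variable {H : Type*} [NormedAddCommGroup H] [InnerProductSpace ℝ H] [CompleteSpace H]

/-- the 2×2 block operator `(x,y) ↦ (P x + Q y, R x + T y)` transported to `WithLp 2 (H × H)`. -/
noncomputable def blockOp (P Q R T : H →L[ℝ] H) :
    WithLp 2 (H × H) →L[ℝ] WithLp 2 (H × H) :=
  (WithLp.prodContinuousLinearEquiv 2 ℝ H H).symm.toContinuousLinearMap ∘L
    ((P.comp (fst ℝ H H) + Q.comp (snd ℝ H H)).prod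
      (R.comp (fst ℝ H H) + T.comp (snd ℝ H H))) ∘L
    (WithLp.prodContinuousLinearEquiv 2 ℝ H H).toContinuousLinearMap

lemma blockOp_apply_fst (P Q R T : H →L[ℝ] H) (z : WithLp 2 (H × H)) :
    (blockOp P Q R T z).ofLp.1 = P z.ofLp.1 + Q z.ofLp.2 := rfl

lemma blockOp_apply_snd (P Q R T : H →L[ℝ] H) (z : WithLp 2 (H × H)) :
    (blockOp P Q R T z).ofLp.2 = R z.ofLp.1 + T z.ofLp.2 := rfl

lemma blockOp_isSelfAdjoint {P Q T : H →L[ℝ] H}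
    (hP : IsSelfAdjoint P) (hQ : IsSelfAdjoint Q) (hT : IsSelfAdjoint T) :
    IsSelfAdjoint (blockOp P Q Q T) := by
  rw [ContinuousLinearMap.isSelfAdjoint_iff_isSymmetric]
  intro z w
  show (inner ℝ (blockOp P Q Q T z) w) = inner ℝ z (blockOp P Q Q T w)
  rw [WithLp.prod_inner_apply, WithLp.prod_inner_apply]
  rw [blockOp_apply_fst, blockOp_apply_snd, blockOp_apply_fst, blockOp_apply_snd]
  have hP' : ∀ x y : H, (inner ℝ (P x) y) = inner ℝ x (P y) :=
    fun x y => (ContinuousLinearMap.isSelfAdjoint_iff_isSymmetric.mp hP) x y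
  have hQ' : ∀ x y : H, (inner ℝ (Q x) y) = inner ℝ x (Q y) :=
    fun x y => (ContinuousLinearMap.isSelfAdjoint_iff_isSymmetric.mp hQ) x y
  have hT' : ∀ x y : H, (inner ℝ (T x) y) = inner ℝ x (T y) :=
    fun x y => (ContinuousLinearMap.isSelfAdjoint_iff_isSymmetric.mp hT) x y
  simp only [inner_add_left, inner_add_right]
  rw [hP' z.ofLp.1 w.ofLp.1, hQ' z.ofLp.2 w.ofLp.1, hQ' z.ofLp.1 w.ofLp.2, hT' z.ofLp.2 w.ofLp.2]
  ring

lemma mem_unitary_of_sa_inv {K : Type*} [NormedAddCommGroup K] [InnerProductSpace ℝ K]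
    [CompleteSpace K] {W : K →L[ℝ] K} (hW : IsSelfAdjoint W) (h2 : W * W = 1) :
    W ∈ unitary (K →L[ℝ] K) := by
  constructor
  · rw [hW.star_eq]; exact h2
  · rw [hW.star_eq]; exact h2

end Blocks

/-- for a self-adjoint bounded operator `B` of norm at most 1 on a real
Hilbert space `H`, the block-diagonal operator `diag(B, -B)` on the Hilbert space direct
sum `H ⊕ H` (i.e. `WithLp 2 (H × H)`) is the average of two orthogonal operators. -/
theorem blockDiag_neg_selfAdjoint_avg_of_two_orthogonals
    {H : Type*} [NormedAddCommGroup H] [InnerProductSpace ℝ H] [CompleteSpace H]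
    (B : H →L[ℝ] H) (hB : IsSelfAdjoint B) (hnorm : ‖B‖ ≤ 1) :
    ∃ U V : WithLp 2 (H × H) →L[ℝ] WithLp 2 (H × H),
      U ∈ unitary (WithLp 2 (H × H) →L[ℝ] WithLp 2 (H × H)) ∧
      V ∈ unitary (WithLp 2 (H × H) →L[ℝ] WithLp 2 (H × H)) ∧
      ((WithLp.prodContinuousLinearEquiv 2 ℝ H H).symm.toContinuousLinearMap ∘L
          (B.prodMap (-B)) ∘L
          (WithLp.prodContinuousLinearEquiv 2 ℝ H H).toContinuousLinearMap) =
        (1 / 2 : ℝ) • (U + V) := by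
  obtain ⟨S, hSsa, hS2, hBS⟩ := exists_opSqrt B hB hnorm
  set U := blockOp B S S (-B) with hU
  set V := blockOp B (-S) (-S) (-B) with hV
  have hUsa : IsSelfAdjoint U := blockOp_isSelfAdjoint hB hSsa hB.neg
  have hVsa : IsSelfAdjoint V := blockOp_isSelfAdjoint hB hSsa.neg hB.neg
  -- pointwise identities from the algebraic relations
  have hBB : ∀ x : H, B (B x) + S (S x) = x := by
    intro x
    have := ContinuousLinearMap.ext_iff.mp hS2 x
    simp only [ContinuousLinearMap.mul_apply, ContinuousLinearMap.sub_apply,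
      ContinuousLinearMap.one_apply] at this
    linear_combination (norm := module) this
  have hBSx : ∀ x : H, B (S x) = S (B x) := by
    intro x
    have := ContinuousLinearMap.ext_iff.mp hBS x
    simpa only [ContinuousLinearMap.mul_apply] using this
  have hU2 : U * U = 1 := by
    ext z
    have h1 : (U (U z)).ofLp.1 = z.ofLp.1 := by
      rw [hU, blockOp_apply_fst, blockOp_apply_fst, blockOp_apply_snd]
      simp only [map_add, ContinuousLinearMap.neg_apply, map_neg]
      linear_combination (norm := module) hBB z.ofLp.1 + hBSx z.ofLp.2
    have h2 : (U (U z)).ofLp.2 = z.ofLp.2 := by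
      rw [hU, blockOp_apply_snd, blockOp_apply_fst, blockOp_apply_snd]
      simp only [map_add, ContinuousLinearMap.neg_apply, map_neg]
      linear_combination (norm := module) hBB z.ofLp.2 - hBSx z.ofLp.1
    show (U (U z)) = z
    exact WithLp.ofLp_injective 2 (Prod.ext h1 h2)
  have hV2 : V * V = 1 := by
    ext z
    have h1 : (V (V z)).ofLp.1 = z.ofLp.1 := by
      rw [hV, blockOp_apply_fst, blockOp_apply_fst, blockOp_apply_snd]
      simp only [map_add, ContinuousLinearMap.neg_apply, map_neg]
      linear_combination (norm := module) hBB z.ofLp.1 - hBSx z.ofLp.2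
    have h2 : (V (V z)).ofLp.2 = z.ofLp.2 := by
      rw [hV, blockOp_apply_snd, blockOp_apply_fst, blockOp_apply_snd]
      simp only [map_add, ContinuousLinearMap.neg_apply, map_neg]
      linear_combination (norm := module) hBB z.ofLp.2 + hBSx z.ofLp.1
    show (V (V z)) = z
    exact WithLp.ofLp_injective 2 (Prod.ext h1 h2)
  refine ⟨U, V, mem_unitary_of_sa_inv hUsa hU2, mem_unitary_of_sa_inv hVsa hV2, ?_⟩
  ext z
  show ((WithLp.prodContinuousLinearEquiv 2 ℝ H H).symm.toContinuousLinearMap ∘L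
      (B.prodMap (-B)) ∘L (WithLp.prodContinuousLinearEquiv 2 ℝ H H).toContinuousLinearMap) z
    = ((1 / 2 : ℝ) • (U + V)) z
  apply WithLp.ofLp_injective 2
  apply Prod.ext
  · show B z.ofLp.1 = ((1/2 : ℝ) • (U z + V z)).ofLp.1
    have : ((1/2 : ℝ) • (U z + V z)).ofLp.1 = (1/2 : ℝ) • ((U z).ofLp.1 + (V z).ofLp.1) := rfl
    rw [this, hU, hV, blockOp_apply_fst, blockOp_apply_fst]
    simp only [ContinuousLinearMap.neg_apply]
    match_scalars <;> norm_num
  · show -B z.ofLp.2 = ((1/2 : ℝ) • (U z + V z)).ofLp.2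
    have : ((1/2 : ℝ) • (U z + V z)).ofLp.2 = (1/2 : ℝ) • ((U z).ofLp.2 + (V z).ofLp.2) := rfl
    rw [this, hU, hV, blockOp_apply_snd, blockOp_apply_snd]
    simp only [ContinuousLinearMap.neg_apply]
    match_scalars <;> norm_num
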